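/- Back-end recursion for the Puiseux characteristic: let W = P R^ρ Q be a critical RVT code word, where P is empty or critical, ρ ≥ 1, and Q is a nonempty entirely critical string beginning with V. If PC(P) = [λ₀; λ₁, …, λ_g] and E(R^ρ Q) = [a;b], then PC(W) = [aλ₀; aλ₁, …, aλ_g, aλ_g + b − 2a]. -/

import Mathlib

/-- The three symbols of an RVT code word. -/
inductive RVT : Type
  | R | V | T
deriving DecidableEq, Repr

/-- Replace a leading run of `T`'s by `R`'s. -/
def deT : List RVT → List RVT
  | RVT.T :: xs => RVT.R :: deT xs
  | xs => xs

/-- If the word begins with `V`, replace that `V` and the immediately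
following `T`'s by `R`'s. -/
def reg : List RVT → List RVT
  | RVT.V :: xs => RVT.R :: deT xs
  | xs => xs

/-- The lifted word `L(W)`: remove the first symbol (an `R`), then replace a
leading maximal critical block `V Tᵗ` by `R^(t+1)`. -/
def lift (w : List RVT) : List RVT := reg w.tail

/-- Length of the leading run of `T`'s. -/
def countT : List RVT → ℕ
  | RVT.T :: xs => countT xs + 1
  | _ => 0

/-- Fueled version of the front-end recursion for the Puiseux characteristic
(Theorem PCfront): base case `[1]` on all-`R` words; given
`PC(L(W)) = [l0; l1, ..., lg]`,
(A) if `W` begins `RR` then `PC(W) = [l0; l1+l0, ..., lg+l0]`;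
(B) if `W` begins `R V T^t R` or `W = R V T^t` then
`PC(W) = [(t+2)l0; (t+3)l0, l1+l0, ..., lg+l0]`;
(C) if `W` begins `R V T^t V` then `PC(W) = [l1; l1+l0, ..., lg+l0]`. -/
def PCf : ℕ → List RVT → List ℕ
  | 0, _ => [1]
  | _ + 1, [] => [1]
  | fuel + 1, w@(_ :: rest) =>
    if w.all (· = RVT.R) then [1]
    else
      let p := PCf fuel (lift w)
      let l0 := p.headD 1
      let tl := p.tail
      match rest with
      | RVT.V :: xs =>
        match xs.drop (countT xs) with
        | RVT.V :: _ => tl.headD 1 :: tl.map (· + l0)                                -- case (C)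
        | _ => ((countT xs + 2) * l0) :: ((countT xs + 3) * l0) :: tl.map (· + l0)   -- case (B)
      | _ => l0 :: tl.map (· + l0)                                                   -- case (A)

/-- The Puiseux characteristic `PC(W)` computed by the front-end recursion. -/
def PC (w : List RVT) : List ℕ := PCf w.length w

/-- A valid RVT code word: begins with `R`, and `T` occurs only immediately
after a `V` or a `T`. -/
def ValidRVT (w : List RVT) : Prop :=
  w.head? = some RVT.R ∧
  ∀ i, w[i + 1]? = some RVT.T → (w[i]? = some RVT.V ∨ w[i]? = some RVT.T)

/-- The function `E` on strings, with `E_T[a;b] = [a;a+b]`, `E_V[a;b] = [b;a+b]`,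
`E_R = E_T`, and base value `E(empty) = [1;2]`; the leftmost symbol acts last. -/
def Efun : List RVT → ℕ × ℕ
  | [] => (1, 2)
  | RVT.V :: q => ((Efun q).2, (Efun q).1 + (Efun q).2)
  | _ :: q => ((Efun q).1, (Efun q).1 + (Efun q).2)

/-- The Euclidean-type recursion: `Euc(1,2)` is the empty word; for coprime
`a < b`, if `b < 2a` then `Euc(a,b) = V · Euc(b-a,a)`, and if `b > 2a` then
`Euc(a,b) = T · Euc(a,b-a)`. -/
def Euc (a b : ℕ) : List RVT :=
  if a = 1 ∧ b = 2 then []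
  else if _h1 : 0 < a ∧ a < b ∧ b < 2 * a then RVT.V :: Euc (b - a) a
  else if _h2 : 0 < a ∧ a < b ∧ 2 * a < b then RVT.T :: Euc a (b - a)
  else []
termination_by a + b
decreasing_by all_goals omega


/-! ### basic list machinery -/

lemma length_deT (l : List RVT) : (deT l).length = l.length := by
  induction l with
  | nil => rfl
  | cons x xs ih => cases x <;> simp [deT, ih]

lemma length_lift (x : RVT) (rest : List RVT) : (lift (x :: rest)).length = rest.length := by
  unfold lift reg
  cases rest with
  | nil => rfl
  | cons y ys => cases y <;> simp [length_deT]

lemma PCf_eq_PC (w : List RVT) (n : ℕ) (h : n = w.length) : PCf n w = PC w := by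
  subst h; rfl

lemma all_R_false_of_mem {w : List RVT} (h : RVT.V ∈ w) : w.all (· = RVT.R) = false := by
  rw [List.all_eq_false]
  exact ⟨RVT.V, h, by decide⟩

lemma PC_allR {w : List RVT} (h : w.all (· = RVT.R) = true) : PC w = [1] := by
  cases w with
  | nil => rfl
  | cons x rest =>
    unfold PC
    simp only [List.length_cons]
    rw [PCf, h]
    simp

lemma PC_A (x : RVT) (rest : List RVT) (h : ((x::rest).all (· = RVT.R)) = false)
    (h2 : rest.head? ≠ some RVT.V) :
    PC (x :: rest) = (PC (lift (x :: rest))).headD 1 ::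
      (PC (lift (x :: rest))).tail.map (· + (PC (lift (x :: rest))).headD 1) := by
  unfold PC
  simp only [List.length_cons]
  rw [PCf, h]
  simp only [Bool.false_eq_true, if_false]
  rw [PCf_eq_PC _ _ (length_lift x rest).symm]
  cases rest with
  | nil => rfl
  | cons y ys =>
    cases y
    · rfl
    · exact absurd rfl h2
    · rfl

lemma PC_B (x : RVT) (xs : List RVT)
    (hdr : (xs.drop (countT xs)).head? ≠ some RVT.V) :
    PC (x :: RVT.V :: xs) =
      ((countT xs + 2) * (PC (lift (x :: RVT.V :: xs))).headD 1) ::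
      ((countT xs + 3) * (PC (lift (x :: RVT.V :: xs))).headD 1) ::
      (PC (lift (x :: RVT.V :: xs))).tail.map (· + (PC (lift (x :: RVT.V :: xs))).headD 1) := by
  unfold PC
  simp only [List.length_cons]
  rw [PCf, all_R_false_of_mem (by simp)]
  simp only [Bool.false_eq_true, if_false]
  rw [PCf_eq_PC _ _ (by simpa using (length_lift x (RVT.V :: xs)).symm)]
  rcases hdd : xs.drop (countT xs) with _ | ⟨c, ys⟩
  · rfl
  · cases c
    · rfl
    · rw [hdd] at hdr; exact absurd rfl hdr
    · rfl

lemma PC_C (x : RVT) (xs : List RVT)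
    (hdr : (xs.drop (countT xs)).head? = some RVT.V) :
    PC (x :: RVT.V :: xs) =
      (PC (lift (x :: RVT.V :: xs))).tail.headD 1 ::
      (PC (lift (x :: RVT.V :: xs))).tail.map (· + (PC (lift (x :: RVT.V :: xs))).headD 1) := by
  unfold PC
  simp only [List.length_cons]
  rw [PCf, all_R_false_of_mem (by simp)]
  simp only [Bool.false_eq_true, if_false]
  rw [PCf_eq_PC _ _ (by simpa using (length_lift x (RVT.V :: xs)).symm)]
  rcases hdd : xs.drop (countT xs) with _ | ⟨c, ys⟩
  · rw [hdd] at hdr; simp at hdr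
  · cases c
    · rw [hdd] at hdr; simp at hdr
    · rfl
    · rw [hdd] at hdr; simp at hdr

/-! ### countT / deT -/

lemma countT_le (xs : List RVT) : countT xs ≤ xs.length := by
  induction xs with
  | nil => simp [countT]
  | cons x t ih => cases x <;> simp [countT] <;> omega

lemma deT_eq (xs : List RVT) :
    deT xs = List.replicate (countT xs) RVT.R ++ xs.drop (countT xs) := by
  induction xs with
  | nil => rfl
  | cons x t ih =>
    cases x
    · rfl
    · rfl
    · simp [deT, countT, ih, List.replicate_succ]

lemma head?_drop_countT (xs : List RVT) : (xs.drop (countT xs)).head? ≠ some RVT.T := by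
  induction xs with
  | nil => simp
  | cons x t ih =>
    cases x
    · simp [countT]
    · simp [countT]
    · simpa [countT] using ih

lemma deT_head_not_T {y : List RVT} (h : y.head? ≠ some RVT.T) : deT y = y := by
  cases y with
  | nil => rfl
  | cons c t => cases c
                · rfl
                · rfl
                · exact absurd rfl h

lemma deT_append {y : List RVT} (xs : List RVT) (h : y.head? ≠ some RVT.T) :
    deT (xs ++ y) = deT xs ++ y := by
  induction xs with
  | nil => simp only [List.nil_append]; rw [deT_head_not_T h]; rfl
  | cons x t ih =>
    cases x
    · rfl
    · rfl
    · simp [deT, ih]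

lemma countT_append {y : List RVT} (xs : List RVT) (h : y.head? ≠ some RVT.T) :
    countT (xs ++ y) = countT xs := by
  induction xs with
  | nil =>
    cases y with
    | nil => rfl
    | cons c t => cases c
                  · rfl
                  · rfl
                  · exact absurd rfl h
  | cons x t ih =>
    cases x
    · rfl
    · rfl
    · simp [countT, ih]

/-! ### Efun -/

lemma Efun_pos (w : List RVT) : 0 < (Efun w).1 ∧ (Efun w).1 < (Efun w).2 := by
  induction w with
  | nil => simp [Efun]
  | cons x t ih => cases x <;> simp [Efun] <;> omega

lemma Efun_R (q : List RVT) : Efun (RVT.R :: q) = ((Efun q).1, (Efun q).1 + (Efun q).2) := rfl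
lemma Efun_T (q : List RVT) : Efun (RVT.T :: q) = ((Efun q).1, (Efun q).1 + (Efun q).2) := rfl
lemma Efun_V (q : List RVT) : Efun (RVT.V :: q) = ((Efun q).2, (Efun q).1 + (Efun q).2) := rfl

lemma Efun_replicate_R (k : ℕ) (z : List RVT) :
    Efun (List.replicate k RVT.R ++ z) = ((Efun z).1, (Efun z).2 + k * (Efun z).1) := by
  induction k with
  | zero => simp
  | succ n ih => simp [List.replicate_succ, Efun_R, ih]; ring

lemma Efun_TR (t : ℕ) (z : List RVT) :
    Efun (List.replicate t RVT.T ++ z) = Efun (List.replicate t RVT.R ++ z) := by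
  induction t with
  | zero => rfl
  | succ n ih => simp [List.replicate_succ, Efun_R, Efun_T, ih]

/-! ### membership of V and validity -/

lemma mem_of_getElem? {l : List RVT} {i : ℕ} {a : RVT} (h : l[i]? = some a) : a ∈ l := by
  rw [List.getElem?_eq_some_iff] at h
  obtain ⟨hl, he⟩ := h
  exact he ▸ List.getElem_mem hl

lemma exists_V {w : List RVT} (hw : ValidRVT w) :
    ∀ i, w[i]? = some RVT.T → ∃ j : ℕ, j < i ∧ w[j]? = some RVT.V := by
  intro i
  induction i with
  | zero =>
    intro h
    rw [← List.head?_eq_getElem?, hw.1] at h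
    simp at h
  | succ n ih =>
    intro h
    rcases hw.2 n h with hV | hT
    · exact ⟨n, Nat.lt_succ_self n, hV⟩
    · obtain ⟨j, hj, hjV⟩ := ih hT
      exact ⟨j, Nat.lt_succ_of_lt hj, hjV⟩

lemma V_mem_tail {w : List RVT} (hw : ValidRVT w)
    (hc : w.getLast? = some RVT.V ∨ w.getLast? = some RVT.T) :
    RVT.V ∈ w.tail := by
  have h0 : w[0]? = some RVT.R := by rw [← List.head?_eq_getElem?]; exact hw.1
  have hlast : w.getLast? = w[w.length - 1]? := by
    rw [List.getLast?_eq_getElem?]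
  obtain ⟨j, hj1, hjV⟩ : ∃ j : ℕ, 1 ≤ j ∧ w[j]? = some RVT.V := by
    rcases hc with hV | hT
    · refine ⟨w.length - 1, ?_, by rw [← hlast]; exact hV⟩
      rcases Nat.eq_zero_or_pos (w.length - 1) with h | h
      · rw [h, h0] at hlast; rw [hV] at hlast; simp at hlast
      · exact h
    · obtain ⟨j, _, hjV⟩ := exists_V hw (w.length - 1) (by rw [← hlast]; exact hT)
      refine ⟨j, ?_, hjV⟩
      rcases Nat.eq_zero_or_pos j with h | h
      · subst h; rw [h0] at hjV; simp at hjV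
      · exact h
  have : w.tail[j - 1]? = some RVT.V := by
    rw [List.getElem?_tail]
    rwa [Nat.sub_add_cancel hj1]
  exact mem_of_getElem? this

lemma lift_RV (x : RVT) (xs : List RVT) : lift (x :: RVT.V :: xs) = RVT.R :: deT xs := rfl
lemma lift_RR (x : RVT) (xs : List RVT) : lift (x :: RVT.R :: xs) = RVT.R :: xs := rfl
lemma lift_RT (x : RVT) (xs : List RVT) : lift (x :: RVT.T :: xs) = RVT.T :: xs := rfl

lemma getElem?_cons_shift (a b : RVT) (l : List RVT) (k : ℕ) :
    (b :: l)[k]? = (a :: b :: l)[k+1]? := by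
  cases k <;> simp

lemma valid_tail_RR {x : RVT} {P'' : List RVT} (h : ValidRVT (x :: RVT.R :: P'')) :
    ValidRVT (RVT.R :: P'') := by
  constructor
  · rfl
  · intro i hT
    rw [getElem?_cons_shift x] at hT
    have := h.2 (i+1) hT
    rwa [← getElem?_cons_shift x] at this

lemma valid_lift_V {x : RVT} {xs : List RVT} (h : ValidRVT (x :: RVT.V :: xs))
    (hd : xs.drop (countT xs) ≠ []) :
    ValidRVT (RVT.R :: deT xs) ∧
    (RVT.R :: deT xs).getLast? = (x :: RVT.V :: xs).getLast? := by
  set t := countT xs with ht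
  set d := xs.drop t with hdd
  have hL : RVT.R :: deT xs = List.replicate (t+1) RVT.R ++ d := by
    rw [deT_eq]; simp [List.replicate_succ]; rfl
  have hget : ∀ k : ℕ, (RVT.R :: deT xs)[k]? =
      if k < t + 1 then some RVT.R else d[k - (t+1)]? := by
    intro k
    rw [hL]
    by_cases hk : k < t + 1
    · rw [List.getElem?_append_left (by simpa using hk), List.getElem?_replicate,
        if_pos hk, if_pos hk]
    · rw [List.getElem?_append_right (by simpa using Nat.not_lt.mp hk), if_neg hk]
      simp
  have hdx : ∀ m : ℕ, d[m]? = xs[t + m]? := by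
    intro m; rw [hdd, List.getElem?_drop]
  have hxs : ∀ k : ℕ, xs[k]? = (x :: RVT.V :: xs)[k+2]? := by
    intro k
    rw [show k + 2 = (k + 1) + 1 by omega, List.getElem?_cons_succ, List.getElem?_cons_succ]
  have hhd : d.head? ≠ some RVT.T := head?_drop_countT xs
  constructor
  · constructor
    · rfl
    · intro i hTi
      rw [hget (i+1)] at hTi
      split_ifs at hTi with h1
      · simp at hTi
      · by_cases hit : i = t
        · subst hit
          rw [Nat.sub_self] at hTi
          rw [← List.head?_eq_getElem?] at hTi
          exact absurd hTi hhd
        · have hik : i + 1 - (t+1) = (i - t - 1) + 1 := by omega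
          rw [hik, hdx, hxs] at hTi
          have hT' : (x :: RVT.V :: xs)[(t + (i - t - 1) + 2) + 1]? = some RVT.T := by
            rw [show (t + (i - t - 1) + 2) + 1 = t + (i - t - 1 + 1) + 2 by omega]
            exact hTi
          have := h.2 (t + (i - t - 1) + 2) hT'
          rw [hget i, if_neg (by omega), show i - (t+1) = i - t - 1 by omega, hdx, hxs]
          exact this
  · obtain ⟨c, hdl⟩ : ∃ c, d.getLast? = some c := by
      rcases hc : d.getLast? with _ | c
      · rw [List.getLast?_eq_none_iff] at hc; exact absurd hc hd
      · exact ⟨c, rfl⟩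
    have hxl : xs.getLast? = some c := by
      conv_lhs => rw [← List.take_append_drop t xs]
      rw [List.getLast?_append, ← hdd, hdl]
      rfl
    have hLl : (RVT.R :: deT xs).getLast? = some c := by
      rw [hL, List.getLast?_append, hdl]; rfl
    have hPl : (x :: RVT.V :: xs).getLast? = some c := by
      rw [show x :: RVT.V :: xs = [x, RVT.V] ++ xs from rfl, List.getLast?_append, hxl]
      rfl
    rw [hLl, hPl]

lemma PC_len2 (n : ℕ) : ∀ w : List RVT, w.length ≤ n → RVT.V ∈ w.tail →
    2 ≤ (PC w).length := by
  induction n with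
  | zero =>
    intro w hlen hV
    cases w with
    | nil => simp at hV
    | cons a b => simp at hlen
  | succ n ih =>
    intro w hlen hV
    match w with
    | [] => simp at hV
    | [x] => simp at hV
    | x :: y :: ys =>
      simp only [List.tail_cons] at hV
      have hall : (x :: y :: ys).all (· = RVT.R) = false :=
        all_R_false_of_mem (List.mem_cons_of_mem _ hV)
      have hlift : (lift (x :: y :: ys)).length ≤ n := by
        rw [length_lift]
        simpa using Nat.le_of_succ_le_succ hlen
      cases y with
      | R =>
        have hVys : RVT.V ∈ ys := by
          rcases List.mem_cons.mp hV with h | h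
          · exact absurd h.symm (by decide)
          · exact h
        rw [PC_A x (RVT.R :: ys) hall (by simp)]
        have h2 := ih _ hlift (by rw [lift_RR]; exact hVys)
        simp only [List.length_cons, List.length_map, List.length_tail]
        omega
      | T =>
        have hVys : RVT.V ∈ ys := by
          rcases List.mem_cons.mp hV with h | h
          · exact absurd h.symm (by decide)
          · exact h
        rw [PC_A x (RVT.T :: ys) hall (by simp)]
        have h2 := ih _ hlift (by rw [lift_RT]; exact hVys)
        simp only [List.length_cons, List.length_map, List.length_tail]
        omega
      | V =>
        by_cases hdr : (ys.drop (countT ys)).head? = some RVT.V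
        · rw [PC_C x ys hdr]
          have hVd : RVT.V ∈ deT ys := by
            rw [deT_eq]
            refine List.mem_append_right _ ?_
            rcases hdrop : ys.drop (countT ys) with _ | ⟨c, t⟩
            · rw [hdrop] at hdr; simp at hdr
            · rw [hdrop] at hdr; simp at hdr; rw [hdr]; exact List.mem_cons_self
          have h2 := ih _ hlift (by rw [lift_RV]; exact hVd)
          simp only [List.length_cons, List.length_map, List.length_tail]
          omega
        · rw [PC_B x ys hdr]
          simp

lemma countT_take (xs : List RVT) :
    List.take (countT xs) xs = List.replicate (countT xs) RVT.T := by
  induction xs with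
  | nil => rfl
  | cons x t ih =>
    cases x
    · rfl
    · rfl
    · simp [countT, List.replicate_succ, ih]

lemma PC_base (n : ℕ) : ∀ ρ Q, ρ + Q.length ≤ n → 1 ≤ ρ →
    (∀ s ∈ Q, s = RVT.V ∨ s = RVT.T) → Q.head? = some RVT.V →
    PC (List.replicate ρ RVT.R ++ Q) =
      [(Efun (List.replicate ρ RVT.R ++ Q)).1,
       (Efun (List.replicate ρ RVT.R ++ Q)).2 - (Efun (List.replicate ρ RVT.R ++ Q)).1] := by
  induction n with
  | zero =>
    intro ρ Q hlen hρ hQ hQh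
    omega
  | succ n ih =>
    intro ρ Q hlen hρ hQ hQh
    obtain ⟨xs, rfl⟩ : ∃ xs, Q = RVT.V :: xs := by
      cases Q with
      | nil => simp at hQh
      | cons q qs => simp at hQh; exact ⟨qs, by rw [hQh]⟩
    have hVQ : RVT.V ∈ List.replicate ρ RVT.R ++ RVT.V :: xs :=
      List.mem_append_right _ (List.mem_cons_self)
    obtain ⟨hc, hcd⟩ := Efun_pos (RVT.V :: xs)
    match ρ with
    | (k+2) =>
      have hW : List.replicate (k+2) RVT.R ++ (RVT.V :: xs) =
          RVT.R :: (List.replicate (k+1) RVT.R ++ (RVT.V :: xs)) := by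
        simp [List.replicate_succ]
      have hrest : List.replicate (k+1) RVT.R ++ (RVT.V :: xs) =
          RVT.R :: (List.replicate k RVT.R ++ (RVT.V :: xs)) := by
        simp [List.replicate_succ]
      have hih := ih (k+1) (RVT.V :: xs) (by simp at hlen ⊢; omega) (by omega) hQ rfl
      have hlf : lift (RVT.R :: (List.replicate (k+1) RVT.R ++ (RVT.V :: xs))) =
          List.replicate (k+1) RVT.R ++ (RVT.V :: xs) := by
        rw [hrest]; rfl
      rw [hW, PC_A RVT.R _ (all_R_false_of_mem (by rw [← hW]; exact hVQ))
        (by rw [hrest]; simp), hlf, hih, Efun_R]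
      obtain ⟨ha, hab⟩ := Efun_pos (List.replicate (k+1) RVT.R ++ (RVT.V :: xs))
      simp only [List.headD_cons, List.tail_cons, List.map_cons, List.map_nil]
      simp only [List.cons.injEq, and_true]
      refine ⟨?_, ?_⟩ <;> first | trivial | omega
    | 1 =>
      have hW : List.replicate 1 RVT.R ++ (RVT.V :: xs) = RVT.R :: RVT.V :: xs := by
        simp
      set t := countT xs with htdef
      have hsplit : xs = List.replicate t RVT.T ++ xs.drop t := by
        conv_lhs => rw [← List.take_append_drop t xs]
        rw [countT_take]
      rcases hdrop : xs.drop t with _ | ⟨c0, d'⟩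
      · -- xs is all T's
        have hxs : xs = List.replicate t RVT.T := by
          rw [hsplit, hdrop, List.append_nil]
        have hliftR : (lift (RVT.R :: RVT.V :: xs)).all (· = RVT.R) = true := by
          rw [lift_RV, deT_eq, ← htdef, hdrop, List.append_nil]
          simp [List.all_eq_true, List.eq_of_mem_replicate]
        rw [hW, PC_B _ _ (by rw [← htdef, hdrop]; simp), PC_allR hliftR]
        have hxsE : Efun xs = (1, t + 2) := by
          rw [hxs, ← List.append_nil (List.replicate t RVT.T), Efun_TR, Efun_replicate_R]
          simp [Efun]; omega
        have hEW : Efun (RVT.R :: RVT.V :: xs) =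
            ((Efun xs).2, (Efun xs).2 + ((Efun xs).1 + (Efun xs).2)) := by
          rw [Efun_R, Efun_V]
        rw [hEW, hxsE]
        simp; omega
      · -- xs = T^t ++ V :: d'
        have hc0 : c0 = RVT.V := by
          have hmem : c0 ∈ xs := List.mem_of_mem_drop (by rw [hdrop]; exact List.mem_cons_self)
          have hne : c0 ≠ RVT.T := by
            have := head?_drop_countT xs
            rw [← htdef, hdrop] at this
            simpa using this
          rcases hQ c0 (List.mem_cons_of_mem _ hmem) with h | h
          · exact h
          · exact absurd h hne
        subst hc0
        have hlift : lift (RVT.R :: RVT.V :: xs) =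
            List.replicate (t+1) RVT.R ++ (RVT.V :: d') := by
          rw [lift_RV, deT_eq, ← htdef, hdrop, List.replicate_succ]
          rfl
        have hih := ih (t+1) (RVT.V :: d')
          (by
            have h1 : t ≤ xs.length := countT_le xs
            have h2 : xs.length = t + (RVT.V :: d').length := by
              conv_lhs => rw [hsplit, hdrop]
              simp
            simp at hlen h2 ⊢
            omega)
          (by omega)
          (by
            intro s hs
            exact hQ s (List.mem_cons_of_mem _ (List.mem_of_mem_drop (by rw [hdrop]; exact hs))))
          rfl
        rw [hW, PC_C _ _ (by rw [← htdef, hdrop]; simp), hlift, hih]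
        obtain ⟨he, hef⟩ := Efun_pos (RVT.V :: d')
        have hE1 : Efun (List.replicate (t+1) RVT.R ++ (RVT.V :: d')) =
            ((Efun (RVT.V :: d')).1, (Efun (RVT.V :: d')).2 + (t+1) * (Efun (RVT.V :: d')).1) :=
          Efun_replicate_R _ _
        have hExs : Efun xs = ((Efun (RVT.V :: d')).1,
            (Efun (RVT.V :: d')).2 + t * (Efun (RVT.V :: d')).1) := by
          conv_lhs => rw [hsplit, hdrop]
          rw [Efun_TR, Efun_replicate_R]
        have hEW : Efun (RVT.R :: RVT.V :: xs) =
            ((Efun xs).2, (Efun xs).2 + ((Efun xs).1 + (Efun xs).2)) := by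
          rw [Efun_R, Efun_V]
        have hring : (t+1) * (Efun (RVT.V :: d')).1 =
            t * (Efun (RVT.V :: d')).1 + (Efun (RVT.V :: d')).1 := by ring
        rw [hEW, hExs, hE1, hring]
        simp
        refine ⟨?_, ?_⟩ <;> first | trivial | omega

lemma map_shift (a q0 : ℕ) (l : List ℕ) :
    (l.map (a * ·)).map (· + a * q0) = (l.map (· + q0)).map (a * ·) := by
  simp only [List.map_map]
  apply List.map_congr_left
  intro x _
  simp [Function.comp]; ring

lemma getLastD_ne_nil {l : List ℕ} (hl : l ≠ []) (d d' : ℕ) :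
    l.getLastD d = l.getLastD d' := by
  rw [List.getLastD_eq_getLast?, List.getLastD_eq_getLast?]
  rcases h : l.getLast? with _ | c
  · rw [List.getLast?_eq_none_iff] at h; exact absurd h hl
  · rfl

lemma getLastD_map_add {l : List ℕ} (hl : l ≠ []) (q0 d d' : ℕ) :
    (l.map (· + q0)).getLastD d = l.getLastD d' + q0 := by
  rw [List.getLastD_eq_getLast?, List.getLastD_eq_getLast?, List.getLast?_map]
  rcases h : l.getLast? with _ | c
  · rw [List.getLast?_eq_none_iff] at h; exact absurd h hl
  · rfl

lemma Efun_a2b {ρ : ℕ} (hρ : 1 ≤ ρ) {Q : List RVT} :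
    0 < (Efun (List.replicate ρ RVT.R ++ Q)).1 ∧
    2 * (Efun (List.replicate ρ RVT.R ++ Q)).1 < (Efun (List.replicate ρ RVT.R ++ Q)).2 := by
  rw [Efun_replicate_R]
  obtain ⟨h1, h2⟩ := Efun_pos Q
  have : (Efun Q).1 ≤ ρ * (Efun Q).1 := Nat.le_mul_of_pos_left _ hρ
  constructor <;> simp <;> omega

lemma getLastD_map_add' (l : List ℕ) (q0 d : ℕ) :
    (l.map (· + q0)).getLastD (d + q0) = l.getLastD d + q0 := by
  cases l with
  | nil => rfl
  | cons x t => exact getLastD_map_add (by simp) q0 (d + q0) d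

lemma PC_main (n : ℕ) : ∀ (P : List RVT) (ρ : ℕ) (Q : List RVT), P.length ≤ n → 1 ≤ ρ →
    ValidRVT P → (P.getLast? = some RVT.V ∨ P.getLast? = some RVT.T) →
    (∀ s ∈ Q, s = RVT.V ∨ s = RVT.T) → Q.head? = some RVT.V →
    PC (P ++ List.replicate ρ RVT.R ++ Q) =
      (PC P).map (fun x => (Efun (List.replicate ρ RVT.R ++ Q)).1 * x) ++
        [(Efun (List.replicate ρ RVT.R ++ Q)).1 * (PC P).getLastD 1 +
          (Efun (List.replicate ρ RVT.R ++ Q)).2 -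
          2 * (Efun (List.replicate ρ RVT.R ++ Q)).1] := by
  induction n with
  | zero =>
    intro P ρ Q hlen _ hval _ _ _
    cases P with
    | nil => simpa [ValidRVT] using hval.1
    | cons x P' => simp at hlen
  | succ n ih =>
    intro P ρ Q hlen hρ hval hcrit hQ hQh
    obtain ⟨P', rfl⟩ : ∃ P', P = RVT.R :: P' := by
      cases P with
      | nil => simpa [ValidRVT] using hval.1
      | cons x P' =>
        have := hval.1
        simp at this
        exact ⟨P', by rw [this]⟩
    cases P' with
    | nil => simp at hcrit
    | cons y xs =>
      have hab := Efun_a2b hρ (Q := Q)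
      have hQV : RVT.V ∈ Q := by
        cases Q with
        | nil => simp at hQh
        | cons q qs => simp at hQh; rw [hQh]; exact List.mem_cons_self
      have hYhead : (List.replicate ρ RVT.R ++ Q).head? = some RVT.R := by
        obtain ⟨m, rfl⟩ := Nat.exists_eq_add_of_le hρ
        rw [List.replicate_add]
        simp [List.replicate_succ]
      cases y with
      | T =>
        have := hval.2 0 (by simp)
        simp at this
      | R =>
        -- case (A)
        have hvP' : ValidRVT (RVT.R :: xs) := valid_tail_RR hval
        have hcP' : (RVT.R :: xs).getLast? = some RVT.V ∨ (RVT.R :: xs).getLast? = some RVT.T := by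
          rwa [List.getLast?_cons_cons] at hcrit
        have hVxs : RVT.V ∈ xs := by
          have := V_mem_tail hvP' hcP'
          simpa using this
        have hih := ih (RVT.R :: xs) ρ Q (by simp at hlen ⊢; omega) hρ hvP' hcP' hQ hQh
        have hp2 : 2 ≤ (PC (RVT.R :: xs)).length :=
          PC_len2 (xs.length + 1) _ (by simp) (by simpa using hVxs)
        rcases hpc : PC (RVT.R :: xs) with _ | ⟨q0, _ | ⟨q1, qr⟩⟩
        · rw [hpc] at hp2; simp at hp2
        · rw [hpc] at hp2; simp at hp2
        · have hPCP : PC (RVT.R :: RVT.R :: xs) = q0 :: (q1 :: qr).map (· + q0) := by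
            rw [PC_A RVT.R (RVT.R :: xs)
              (all_R_false_of_mem (List.mem_cons_of_mem _ (List.mem_cons_of_mem _ hVxs)))
              (by simp), lift_RR, hpc]
            simp
          have hw : (RVT.R :: RVT.R :: xs) ++ List.replicate ρ RVT.R ++ Q =
              RVT.R :: RVT.R :: (xs ++ (List.replicate ρ RVT.R ++ Q)) := by simp
          simp only [List.append_assoc, List.cons_append] at hih ⊢
          rw [hpc] at hih
          rw [PC_A RVT.R _
            (all_R_false_of_mem (by
              refine List.mem_cons_of_mem _ (List.mem_cons_of_mem _ ?_)
              exact List.mem_append_right _ (List.mem_append_right _ hQV)))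
            (by simp), lift_RR, hih, hPCP]
          simp only [List.map_cons, List.map_append, List.map_nil, List.headD_cons,
            List.tail_cons, List.cons_append, List.nil_append, List.cons.injEq,
            List.getLastD_cons, true_and]
          constructor
          · ring
          · rw [map_shift, getLastD_map_add']
            congr 1
            simp only [List.cons.injEq, and_true]
            have h3 : (Efun (List.replicate ρ RVT.R ++ Q)).1 * (qr.getLastD q1 + q0) =
                (Efun (List.replicate ρ RVT.R ++ Q)).1 * qr.getLastD q1 +
                (Efun (List.replicate ρ RVT.R ++ Q)).1 * q0 := by ring
            rw [h3]
            omega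
      | V =>
        have hYT : (List.replicate ρ RVT.R ++ Q).head? ≠ some RVT.T := by
          rw [hYhead]; simp
        have hcount : countT (xs ++ (List.replicate ρ RVT.R ++ Q)) = countT xs :=
          countT_append _ hYT
        have hsplit : xs = List.replicate (countT xs) RVT.T ++ xs.drop (countT xs) := by
          conv_lhs => rw [← List.take_append_drop (countT xs) xs]
          rw [countT_take]
        have hdropW : (xs ++ (List.replicate ρ RVT.R ++ Q)).drop
            (countT (xs ++ (List.replicate ρ RVT.R ++ Q))) =
            xs.drop (countT xs) ++ (List.replicate ρ RVT.R ++ Q) := by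
          rw [hcount, List.drop_append_of_le_length (countT_le xs)]
        obtain ⟨hc, hcd⟩ := Efun_pos Q
        rcases hdrop : xs.drop (countT xs) with _ | ⟨c0, dd'⟩
        · -- P = R V T^t
          have hxs : xs = List.replicate (countT xs) RVT.T := by
            rw [hdrop, List.append_nil] at hsplit
            exact hsplit
          have hdeT : deT xs = List.replicate (countT xs) RVT.R := by
            rw [deT_eq, hdrop, List.append_nil]
          have hPCP : PC (RVT.R :: RVT.V :: xs) = [countT xs + 2, countT xs + 3] := by
            rw [PC_B RVT.R xs (by rw [hdrop]; simp), lift_RV,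
              PC_allR (w := RVT.R :: deT xs) (by
                rw [hdeT]
                simp [List.all_eq_true, List.eq_of_mem_replicate])]
            simp
          simp only [List.append_assoc, List.cons_append] at hdropW ⊢
          have hliftW : lift (RVT.R :: RVT.V :: (xs ++ (List.replicate ρ RVT.R ++ Q))) =
              List.replicate (countT xs + 1 + ρ) RVT.R ++ Q := by
            rw [lift_RV, deT_append _ hYT, hdeT, List.replicate_add,
              List.append_assoc, List.replicate_succ]
            rfl
          have hbase := PC_base (countT xs + 1 + ρ + Q.length) (countT xs + 1 + ρ) Q
            le_rfl (by omega) hQ hQh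
          rw [PC_B RVT.R _ (by
              rw [hdropW, hdrop, List.nil_append, hYhead]
              simp), hliftW, hbase, hPCP]
          rw [Efun_replicate_R, Efun_replicate_R]
          rw [hcount]
          simp only [List.headD_cons, List.tail_cons, List.map_cons, List.map_nil,
            List.getLastD_cons, List.cons_append, List.nil_append, List.cons.injEq,
            List.getLastD_nil]
          have e1 : (countT xs + 1 + ρ) * (Efun Q).1 =
              countT xs * (Efun Q).1 + (Efun Q).1 + ρ * (Efun Q).1 := by ring
          have e2 : (Efun Q).1 * (countT xs + 3) =
              countT xs * (Efun Q).1 + 3 * (Efun Q).1 := by ring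
          have e3 : (Efun Q).1 * (countT xs + 2) =
              countT xs * (Efun Q).1 + 2 * (Efun Q).1 := by ring
          have e4 : (countT xs + 2) * (Efun Q).1 =
              countT xs * (Efun Q).1 + 2 * (Efun Q).1 := by ring
          have e5 : (countT xs + 3) * (Efun Q).1 =
              countT xs * (Efun Q).1 + 3 * (Efun Q).1 := by ring
          have hQρ : (Efun Q).1 ≤ ρ * (Efun Q).1 := Nat.le_mul_of_pos_left _ hρ
          refine ⟨by omega, by omega, by omega, trivial⟩
        · -- xs.drop (countT xs) = c0 :: dd'
          have hddne : xs.drop (countT xs) ≠ [] := by rw [hdrop]; simp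
          have hvlift := valid_lift_V hval hddne
          have hclift : (RVT.R :: deT xs).getLast? = some RVT.V ∨
              (RVT.R :: deT xs).getLast? = some RVT.T := by
            rw [hvlift.2]; exact hcrit
          have hih := ih (RVT.R :: deT xs) ρ Q
            (by simp only [List.length_cons, length_deT] at *; omega)
            hρ hvlift.1 hclift hQ hQh
          have hp2 : 2 ≤ (PC (RVT.R :: deT xs)).length :=
            PC_len2 (xs.length + 1) _ (by simp [length_deT])
              (by simpa using V_mem_tail hvlift.1 hclift)
          rcases hpc : PC (RVT.R :: deT xs) with _ | ⟨q0, _ | ⟨q1, qr⟩⟩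
          · rw [hpc] at hp2; simp at hp2
          · rw [hpc] at hp2; simp at hp2
          · have hliftW : lift (RVT.R :: RVT.V :: (xs ++ (List.replicate ρ RVT.R ++ Q))) =
                RVT.R :: (deT xs ++ (List.replicate ρ RVT.R ++ Q)) := by
              rw [lift_RV, deT_append _ hYT]
            simp only [List.append_assoc, List.cons_append] at hih hdropW ⊢
            rw [hpc] at hih
            have hc0 : c0 = RVT.V ∨ c0 = RVT.R := by
              have := head?_drop_countT xs
              rw [hdrop] at this
              simp at this
              cases c0
              · right; rfl
              · left; rfl
              · exact absurd rfl this
            rcases hc0 with rfl | rfl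
            · -- case (C)
              have hPCP : PC (RVT.R :: RVT.V :: xs) = q1 :: (q1 :: qr).map (· + q0) := by
                rw [PC_C RVT.R xs (by rw [hdrop]; simp), lift_RV, hpc]
                simp
              rw [PC_C RVT.R _ (by
                  rw [hdropW, hdrop]
                  simp), hliftW, hih, hPCP]
              simp only [List.map_cons, List.map_append, List.map_nil, List.headD_cons,
                List.tail_cons, List.cons_append, List.nil_append, List.cons.injEq,
                List.getLastD_cons, true_and]
              refine ⟨by ring, ?_⟩
              rw [map_shift, getLastD_map_add']
              congr 1
              simp only [List.cons.injEq, and_true]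
              have h3 : (Efun (List.replicate ρ RVT.R ++ Q)).1 * (qr.getLastD q1 + q0) =
                  (Efun (List.replicate ρ RVT.R ++ Q)).1 * qr.getLastD q1 +
                  (Efun (List.replicate ρ RVT.R ++ Q)).1 * q0 := by ring
              rw [h3]
              have := Efun_a2b hρ (Q := Q)
              omega
            · -- case (B)
              have hPCP : PC (RVT.R :: RVT.V :: xs) =
                  (countT xs + 2) * q0 :: (countT xs + 3) * q0 ::
                    (q1 :: qr).map (· + q0) := by
                rw [PC_B RVT.R xs (by rw [hdrop]; simp), lift_RV, hpc]
                simp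
              rw [PC_B RVT.R _ (by
                  rw [hdropW, hdrop]
                  simp), hliftW, hih, hPCP]
              rw [hcount]
              simp only [List.map_cons, List.map_append, List.map_nil, List.headD_cons,
                List.tail_cons, List.cons_append, List.nil_append, List.cons.injEq,
                List.getLastD_cons, true_and]
              refine ⟨by ring, by ring, by ring, ?_⟩
              rw [map_shift, getLastD_map_add']
              congr 1
              simp only [List.cons.injEq, and_true]
              have h3 : (Efun (List.replicate ρ RVT.R ++ Q)).1 * (qr.getLastD q1 + q0) =
                  (Efun (List.replicate ρ RVT.R ++ Q)).1 * qr.getLastD q1 +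
                  (Efun (List.replicate ρ RVT.R ++ Q)).1 * q0 := by ring
              rw [h3]
              have := Efun_a2b hρ (Q := Q)
              omega

/-- Back-end recursion: for a critical word `W = P R^ρ Q` with `P` empty or
critical, `ρ ≥ 1`, and `Q` nonempty entirely critical beginning with `V`, if
`PC(P) = [l0; l1, ..., lg]` and `E(R^ρ Q) = [a; b]`, then
`PC(W) = [a l0; a l1, ..., a lg, a lg + b − 2a]`. -/
theorem statement8 (P Q : List RVT) (ρ : ℕ) (hρ : 1 ≤ ρ)
    (hP : P = [] ∨ (ValidRVT P ∧
      (P.getLast? = some RVT.V ∨ P.getLast? = some RVT.T)))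
    (hQ : ∀ s ∈ Q, s = RVT.V ∨ s = RVT.T)
    (hQhead : Q.head? = some RVT.V) :
    PC (P ++ List.replicate ρ RVT.R ++ Q) =
      (PC P).map (fun x => (Efun (List.replicate ρ RVT.R ++ Q)).1 * x) ++
        [(Efun (List.replicate ρ RVT.R ++ Q)).1 * (PC P).getLastD 1 +
          (Efun (List.replicate ρ RVT.R ++ Q)).2 -
          2 * (Efun (List.replicate ρ RVT.R ++ Q)).1] := by
  rcases hP with rfl | ⟨hval, hcrit⟩
  · have hb := Efun_a2b hρ (Q := Q)
    have hbase := PC_base (ρ + Q.length) ρ Q le_rfl hρ hQ hQhead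
    simp only [List.nil_append]
    rw [hbase, show PC ([] : List RVT) = [1] from rfl]
    simp only [List.map_cons, List.map_nil, List.getLastD_cons, List.getLastD_nil,
      Nat.mul_one, List.cons_append, List.nil_append, List.cons.injEq, true_and, and_true]
    omega
  · exact PC_main P.length P ρ Q le_rfl hρ hval hcrit hQ hQhead
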